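/- For all x in (0, π/2), cosh(x) · (1 + cos(x)) ≥ 2. -/
import Mathlib
theorem stmt_6 (x : ℝ) (hx : x ∈ Set.Ioo 0 (Real.pi / 2)) :
    Real.cosh x * (1 + Real.cos x) ≥ 2 := by
  obtain ⟨hx0, hx2⟩ := hx
  set t := x / 2 with ht
  have ht0 : 0 < t := by positivity
  have hpi : Real.pi < 3.15 := by
    have := Real.pi_lt_d2
    linarith
  have htlt : t < 0.7875 := by
    simp only [ht]; linarith
  have hsinh : t < Real.sinh t := Real.self_lt_sinh_iff.mpr ht0
  have hcos : 1 - t ^ 2 / 2 ≤ Real.cos t := Real.one_sub_sq_div_two_le_cos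
  have hcosnn : (0:ℝ) ≤ Real.cos t := by
    apply Real.cos_nonneg_of_mem_Icc
    constructor
    · linarith [Real.pi_pos]
    · linarith
  have h1 : Real.cosh x = Real.cosh t ^ 2 + Real.sinh t ^ 2 := by
    rw [show x = 2 * t by ring, Real.cosh_two_mul]
  have h2 : 1 + Real.cos x = 2 * Real.cos t ^ 2 := by
    rw [show x = 2 * t by ring, Real.cos_two_mul]; ring
  have h3 : Real.cosh t ^ 2 = Real.sinh t ^ 2 + 1 := Real.cosh_sq t
  rw [h1, h2, h3]
  have hc : 1 - t ^ 2 / 2 > 0 := by nlinarith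
  have hs2 : Real.sinh t ^ 2 ≥ t ^ 2 := by nlinarith
  have hc2 : Real.cos t ^ 2 ≥ (1 - t ^ 2 / 2) ^ 2 := by nlinarith
  have key : (2 * t ^ 2 + 1) * (2 * (1 - t ^ 2 / 2) ^ 2) ≥ 2 := by
    have hu : t ^ 2 < 0.62016 := by nlinarith
    nlinarith [mul_pos (show (0:ℝ) < 0.71 - t ^ 2 by nlinarith)
      (show (0:ℝ) < 2.7 - t ^ 2 by nlinarith)]
  nlinarith [mul_le_mul hs2.le hc2.le (by positivity) (by positivity)]
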